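/- ζ(3) = (4/7)(π G − ∫₀^{π/2} x ln(csc(x) + cot(x)) dx), where G is Catalan's constant. -/

import Mathlib

open Real

noncomputable def catalanG : ℝ := ∑' n : ℕ, (-1 : ℝ) ^ n / (2 * (n : ℝ) + 1) ^ 2

open Real MeasureTheory Filter Finset Topology


lemma cos_odd_half_pi (k : ℕ) : Real.cos ((2*(k:ℝ)+1) * (π/2)) = 0 := by
  induction k with
  | zero => norm_num
  | succ n ih =>
      have : (2*((n:ℝ)+1)+1) * (π/2) = (2*(n:ℝ)+1) * (π/2) + π := by ring
      push_cast
      rw [this, Real.cos_add_pi]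
      push_cast at ih
      rw [ih]; ring

lemma sin_odd_half_pi (k : ℕ) : Real.sin ((2*(k:ℝ)+1) * (π/2)) = (-1)^k := by
  induction k with
  | zero => norm_num
  | succ n ih =>
      have : (2*((n:ℝ)+1)+1) * (π/2) = (2*(n:ℝ)+1) * (π/2) + π := by ring
      push_cast
      rw [this, Real.sin_add_pi]
      push_cast at ih
      rw [ih]; ring

lemma sum_sin_odd (N : ℕ) (t : ℝ) :
    (∑ k ∈ Finset.range N, 2 * Real.sin ((2*(k:ℝ)+1)*t)) * Real.sin t
      = 1 - Real.cos (2*(N:ℝ)*t) := by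
  induction N with
  | zero => norm_num
  | succ n ih =>
      rw [Finset.sum_range_succ, add_mul, ih]
      have h1 : 2*((n:ℝ)+1)*t = 2*(n:ℝ)*t + 2*t := by ring
      have h2 : (2*(n:ℝ)+1)*t = 2*(n:ℝ)*t + t := by ring
      push_cast
      rw [h1, h2, Real.cos_add, Real.sin_add, Real.cos_two_mul' , Real.sin_two_mul]
      linear_combination Real.cos (2*(n:ℝ)*t) * Real.sin_sq_add_cos_sq t

noncomputable def Ff (x : ℝ) : ℝ := Real.log (1 / Real.sin x + Real.cot x)

noncomputable def Sf (N : ℕ) (x : ℝ) : ℝ :=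
  ∑ k ∈ Finset.range N, 2 * Real.cos ((2*(k:ℝ)+1)*x) / (2*(k:ℝ)+1)

lemma one_add_cos_pos {t : ℝ} (h : 0 < Real.sin t) : 0 < 1 + Real.cos t := by
  nlinarith [Real.sin_sq_add_cos_sq t, Real.neg_one_le_cos t]

lemma Ff_eq {x : ℝ} (h : 0 < Real.sin x) :
    Ff x = Real.log (1 + Real.cos x) - Real.log (Real.sin x) := by
  have h2 := one_add_cos_pos h
  rw [Ff, Real.cot_eq_cos_div_sin, ← add_div, Real.log_div h2.ne' h.ne']

lemma hasDerivAt_Ff {t : ℝ} (h : 0 < Real.sin t) :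
    HasDerivAt Ff (-(1 / Real.sin t)) t := by
  have h2 := one_add_cos_pos h
  have d1 : HasDerivAt (fun x => Real.log (1 + Real.cos x) - Real.log (Real.sin x))
      (-Real.sin t / (1 + Real.cos t) - Real.cos t / Real.sin t) t := by
    have a1 : HasDerivAt (fun x : ℝ => 1 + Real.cos x) (-Real.sin t) t :=
      (Real.hasDerivAt_cos t).const_add 1
    have a2 : HasDerivAt (fun x : ℝ => Real.sin x) (Real.cos t) t := Real.hasDerivAt_sin t
    exact (a1.log h2.ne').sub (a2.log h.ne')
  have heq : -Real.sin t / (1 + Real.cos t) - Real.cos t / Real.sin t = -(1 / Real.sin t) := by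
    have hs := Real.sin_sq_add_cos_sq t
    field_simp
    nlinarith [hs]
  rw [heq] at d1
  apply d1.congr_of_eventuallyEq
  have hopen : IsOpen {x : ℝ | 0 < Real.sin x} := isOpen_lt continuous_const Real.continuous_sin
  filter_upwards [hopen.mem_nhds h] with x hx
  exact Ff_eq hx

lemma hasDerivAt_Sf (N : ℕ) (t : ℝ) :
    HasDerivAt (Sf N) (-∑ k ∈ Finset.range N, 2 * Real.sin ((2*(k:ℝ)+1)*t)) t := by
  have : HasDerivAt (Sf N)
      (∑ k ∈ Finset.range N, -(2 * Real.sin ((2*(k:ℝ)+1)*t))) t := by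
    apply HasDerivAt.fun_sum
    intro k _
    have l1 : HasDerivAt (fun x : ℝ => (2*(k:ℝ)+1)*x) (2*(k:ℝ)+1) t := by
      simpa using (hasDerivAt_id t).const_mul (2*(k:ℝ)+1)
    have l2 : HasDerivAt (fun x : ℝ => Real.cos ((2*(k:ℝ)+1)*x))
        (-Real.sin ((2*(k:ℝ)+1)*t) * (2*(k:ℝ)+1)) t := l1.cos
    have l3 := (l2.const_mul 2).div_const (2*(k:ℝ)+1)
    refine l3.congr_deriv ?_
    have hk : (2*(k:ℝ)+1) ≠ 0 := by positivity
    field_simp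
  simpa using this

lemma Ff_pi_div_two : Ff (π/2) = 0 := by
  rw [Ff, Real.cot_eq_cos_div_sin, Real.sin_pi_div_two, Real.cos_pi_div_two]
  norm_num

lemma Sf_pi_div_two (N : ℕ) : Sf N (π/2) = 0 := by
  rw [Sf]
  apply Finset.sum_eq_zero
  intro k _
  rw [cos_odd_half_pi k]
  simp

lemma sin_pos_of_mem {x t : ℝ} (hx : 0 < x) (hx2 : x ≤ π/2)
    (ht : t ∈ Set.Icc x (π/2)) : 0 < Real.sin t :=
  Real.sin_pos_of_pos_of_lt_pi (lt_of_lt_of_le hx ht.1)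
    (lt_of_le_of_lt ht.2 (by linarith [Real.pi_pos]))

lemma key_rep (N : ℕ) {x : ℝ} (hx : 0 < x) (hx2 : x ≤ π/2) :
    Ff x - Sf N x = ∫ t in x..(π/2), Real.cos (2*(N:ℝ)*t) / Real.sin t := by
  have huIcc : Set.uIcc x (π/2) = Set.Icc x (π/2) := Set.uIcc_of_le hx2
  have hderiv : ∀ t ∈ Set.uIcc x (π/2),
      HasDerivAt (fun t => -(Ff t - Sf N t)) (Real.cos (2*(N:ℝ)*t) / Real.sin t) t := by
    intro t ht
    rw [huIcc] at ht
    have hst := sin_pos_of_mem hx hx2 ht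
    have hd := ((hasDerivAt_Ff hst).fun_sub (hasDerivAt_Sf N t)).fun_neg
    refine hd.congr_deriv ?_
    have hsum := sum_sin_odd N t
    field_simp
    rw [show 2 * t * (N:ℝ) = 2 * (N:ℝ) * t by ring]
    linear_combination -hsum
  have hint : IntervalIntegrable (fun t => Real.cos (2*(N:ℝ)*t) / Real.sin t)
      volume x (π/2) := by
    apply ContinuousOn.intervalIntegrable
    rw [huIcc]
    apply ContinuousOn.div (Continuous.continuousOn (by continuity))
      Real.continuous_sin.continuousOn
    intro t ht
    exact (sin_pos_of_mem hx hx2 ht).ne'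
  have := intervalIntegral.integral_eq_sub_of_hasDerivAt hderiv hint
  rw [this, Ff_pi_div_two, Sf_pi_div_two]
  ring

lemma cont_aux1 (c : ℝ) : Continuous (fun t : ℝ => Real.cos (c*t)) :=
  Real.continuous_cos.comp (continuous_const.mul continuous_id)

lemma cont_aux2 (c : ℝ) : Continuous (fun t : ℝ => Real.sin (c*t)) :=
  Real.continuous_sin.comp (continuous_const.mul continuous_id)

lemma bound_tail (N : ℕ) (hN : 1 ≤ N) {x : ℝ} (hx : 0 < x) (hx2 : x ≤ π/2) :
    |∫ t in x..(π/2), Real.cos (2*(N:ℝ)*t) / Real.sin t| ≤ 1 / ((N:ℝ) * Real.sin x) := by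
  have hNpos : (0:ℝ) < N := by exact_mod_cast hN
  have hsx : 0 < Real.sin x := Real.sin_pos_of_pos_of_lt_pi hx
    (lt_of_le_of_lt hx2 (by linarith [Real.pi_pos]))
  have hgderiv : ∀ t ∈ Set.uIcc x (π/2),
      HasDerivAt (fun t => Real.sin (2*(N:ℝ)*t) / (2*(N:ℝ) * Real.sin t))
        (Real.cos (2*(N:ℝ)*t) / Real.sin t
          - Real.sin (2*(N:ℝ)*t) * Real.cos t / (2*(N:ℝ) * Real.sin t^2)) t := by
    intro t ht
    rw [Set.uIcc_of_le hx2] at ht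
    have hst := sin_pos_of_mem hx hx2 ht
    have a1 : HasDerivAt (fun u : ℝ => Real.sin (2*(N:ℝ)*u))
        (Real.cos (2*(N:ℝ)*t) * (2*(N:ℝ))) t := by
      have h0 : HasDerivAt (fun u : ℝ => 2*(N:ℝ)*u) (2*(N:ℝ)) t := by
        simpa using (hasDerivAt_id t).const_mul (2*(N:ℝ))
      exact h0.sin
    have a2 : HasDerivAt (fun u : ℝ => 2*(N:ℝ) * Real.sin u)
        (2*(N:ℝ) * Real.cos t) t := (Real.hasDerivAt_sin t).const_mul _
    have hden : 2*(N:ℝ) * Real.sin t ≠ 0 := by positivity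
    have hdd := a1.fun_div a2 hden
    refine hdd.congr_deriv ?_
    field_simp
  have hint1 : IntervalIntegrable (fun t => Real.cos (2*(N:ℝ)*t) / Real.sin t)
      volume x (π/2) := by
    apply ContinuousOn.intervalIntegrable
    rw [Set.uIcc_of_le hx2]
    exact ContinuousOn.div (cont_aux1 _).continuousOn
      Real.continuous_sin.continuousOn
      (fun t ht => (sin_pos_of_mem hx hx2 ht).ne')
  have hintr : IntervalIntegrable
      (fun t => Real.sin (2*(N:ℝ)*t) * Real.cos t / (2*(N:ℝ) * Real.sin t^2))
      volume x (π/2) := by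
    apply ContinuousOn.intervalIntegrable
    rw [Set.uIcc_of_le hx2]
    apply ContinuousOn.div ((cont_aux2 _).mul Real.continuous_cos).continuousOn
      (continuous_const.mul (Real.continuous_sin.pow 2)).continuousOn
    intro t ht
    have := sin_pos_of_mem hx hx2 ht
    exact (mul_pos (mul_pos two_pos hNpos) (pow_pos this 2)).ne'
  have hsplit := intervalIntegral.integral_eq_sub_of_hasDerivAt hgderiv (hint1.sub hintr)
  rw [intervalIntegral.integral_sub hint1 hintr] at hsplit
  have hgpi : Real.sin (2*(N:ℝ)*(π/2)) / (2*(N:ℝ) * Real.sin (π/2)) = 0 := by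
    rw [show (2*(N:ℝ)*(π/2)) = ((N:ℕ):ℝ)*π by push_cast; ring, Real.sin_nat_mul_pi]
    simp
  -- second integral bound
  have hintb : IntervalIntegrable
      (fun t => Real.cos t / (2*(N:ℝ) * Real.sin t^2)) volume x (π/2) := by
    apply ContinuousOn.intervalIntegrable
    rw [Set.uIcc_of_le hx2]
    apply ContinuousOn.div Real.continuous_cos.continuousOn
      (continuous_const.mul (Real.continuous_sin.pow 2)).continuousOn
    intro t ht
    have := sin_pos_of_mem hx hx2 ht
    exact (mul_pos (mul_pos two_pos hNpos) (pow_pos this 2)).ne'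
  have habs : |∫ t in x..(π/2), Real.sin (2*(N:ℝ)*t) * Real.cos t / (2*(N:ℝ) * Real.sin t^2)|
      ≤ ∫ t in x..(π/2), Real.cos t / (2*(N:ℝ) * Real.sin t^2) := by
    have h1 : |∫ t in x..(π/2), Real.sin (2*(N:ℝ)*t) * Real.cos t / (2*(N:ℝ) * Real.sin t^2)|
        ≤ ∫ t in x..(π/2), |Real.sin (2*(N:ℝ)*t) * Real.cos t / (2*(N:ℝ) * Real.sin t^2)| := by
      simpa using intervalIntegral.abs_integral_le_integral_abs (μ := volume) hx2
        (f := fun t => Real.sin (2*(N:ℝ)*t) * Real.cos t / (2*(N:ℝ) * Real.sin t^2))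
    refine h1.trans ?_
    apply intervalIntegral.integral_mono_on hx2 hintr.abs hintb
    intro t ht
    have hst := sin_pos_of_mem hx hx2 ht
    have hct : 0 ≤ Real.cos t := Real.cos_nonneg_of_mem_Icc
      ⟨by linarith [ht.1, Real.pi_pos], ht.2⟩
    rw [abs_div, abs_of_pos (by positivity : (0:ℝ) < 2*(N:ℝ)*Real.sin t^2),
      abs_mul, abs_of_nonneg hct]
    gcongr
    exact mul_le_of_le_one_left hct (Real.abs_sin_le_one _)
  -- value of the bounding integral
  have hval : (∫ t in x..(π/2), Real.cos t / (2*(N:ℝ) * Real.sin t^2))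
      = 1/(2*(N:ℝ)) * (1/Real.sin x - 1) := by
    have hderiv2 : ∀ t ∈ Set.uIcc x (π/2),
        HasDerivAt (fun t => -(1/(2*(N:ℝ) * Real.sin t)))
          (Real.cos t / (2*(N:ℝ) * Real.sin t^2)) t := by
      intro t ht
      rw [Set.uIcc_of_le hx2] at ht
      have hst := sin_pos_of_mem hx hx2 ht
      have hden : 2*(N:ℝ) * Real.sin t ≠ 0 := by positivity
      have a2 : HasDerivAt (fun u : ℝ => 2*(N:ℝ) * Real.sin u)
          (2*(N:ℝ) * Real.cos t) t := (Real.hasDerivAt_sin t).const_mul _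
      have hdd := ((hasDerivAt_const t (1:ℝ)).fun_div a2 hden).fun_neg
      refine hdd.congr_deriv ?_
      field_simp
      ring
    rw [intervalIntegral.integral_eq_sub_of_hasDerivAt hderiv2 hintb]
    rw [Real.sin_pi_div_two]
    field_simp
    ring
  have habs2 : |Real.sin (2*(N:ℝ)*x) / (2*(N:ℝ) * Real.sin x)| ≤ 1/(2*(N:ℝ)*Real.sin x) := by
    rw [abs_div, abs_of_pos (by positivity : (0:ℝ) < 2*(N:ℝ)*Real.sin x)]
    gcongr
    exact Real.abs_sin_le_one _
  have hfin : (∫ t in x..(π/2), Real.cos (2*(N:ℝ)*t) / Real.sin t)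
      = (0 - Real.sin (2*(N:ℝ)*x) / (2*(N:ℝ) * Real.sin x))
        + ∫ t in x..(π/2), Real.sin (2*(N:ℝ)*t) * Real.cos t / (2*(N:ℝ) * Real.sin t^2) := by
    rw [← hgpi]
    linarith [hsplit]
  rw [hfin]
  have hsx1 : 1/Real.sin x - 1 ≥ 0 := by
    have : Real.sin x ≤ 1 := Real.sin_le_one x
    have h1 : 1 ≤ 1/Real.sin x := by
      rw [le_div_iff₀ hsx]; linarith
    linarith
  calc |0 - Real.sin (2*(N:ℝ)*x) / (2*(N:ℝ) * Real.sin x)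
        + ∫ t in x..(π/2), Real.sin (2*(N:ℝ)*t) * Real.cos t / (2*(N:ℝ) * Real.sin t^2)|
      ≤ |Real.sin (2*(N:ℝ)*x) / (2*(N:ℝ) * Real.sin x)|
        + |∫ t in x..(π/2), Real.sin (2*(N:ℝ)*t) * Real.cos t / (2*(N:ℝ) * Real.sin t^2)| := by
        rw [zero_sub]
        exact (abs_add_le _ _).trans (by rw [abs_neg])
    _ ≤ 1/(2*(N:ℝ)*Real.sin x) + 1/(2*(N:ℝ)) * (1/Real.sin x - 1) := by
        refine add_le_add habs2 (habs.trans (le_of_eq hval))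
    _ ≤ 1 / ((N:ℝ) * Real.sin x) := by
        have e : 1/(2*(N:ℝ)*Real.sin x) + 1/(2*(N:ℝ)) * (1/Real.sin x)
            = 1/((N:ℝ)*Real.sin x) := by field_simp; ring
        have e2 : 1/(2*(N:ℝ)) * (1/Real.sin x - 1)
            = 1/(2*(N:ℝ)) * (1/Real.sin x) - 1/(2*(N:ℝ)) := by ring
        have e3 : (0:ℝ) ≤ 1/(2*(N:ℝ)) := by positivity
        linarith

lemma integral_x_cos (k : ℕ) :
    ∫ x in (0:ℝ)..(π/2), x * Real.cos ((2*(k:ℝ)+1)*x)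
      = (π/2) * (-1)^k/(2*(k:ℝ)+1) - 1/(2*(k:ℝ)+1)^2 := by
  have hm : (0:ℝ) < 2*(k:ℝ)+1 := by positivity
  have hd : ∀ x ∈ Set.uIcc (0:ℝ) (π/2),
      HasDerivAt (fun x => x * Real.sin ((2*(k:ℝ)+1)*x)/(2*(k:ℝ)+1)
        + Real.cos ((2*(k:ℝ)+1)*x)/(2*(k:ℝ)+1)^2)
        (x * Real.cos ((2*(k:ℝ)+1)*x)) x := by
    intro x _
    have l1 : HasDerivAt (fun u : ℝ => (2*(k:ℝ)+1)*u) (2*(k:ℝ)+1) x := by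
      simpa using (hasDerivAt_id x).const_mul (2*(k:ℝ)+1)
    have l2 : HasDerivAt (fun u : ℝ => u * Real.sin ((2*(k:ℝ)+1)*u))
        (Real.sin ((2*(k:ℝ)+1)*x) + x * (Real.cos ((2*(k:ℝ)+1)*x) * (2*(k:ℝ)+1))) x := by
      simpa using (hasDerivAt_id x).fun_mul l1.sin
    have l3 : HasDerivAt (fun u : ℝ => Real.cos ((2*(k:ℝ)+1)*u))
        (-Real.sin ((2*(k:ℝ)+1)*x) * (2*(k:ℝ)+1)) x := l1.cos
    have := (l2.div_const (2*(k:ℝ)+1)).fun_add (l3.div_const ((2*(k:ℝ)+1)^2))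
    refine this.congr_deriv ?_
    field_simp
    ring
  have hint : IntervalIntegrable (fun x => x * Real.cos ((2*(k:ℝ)+1)*x)) volume 0 (π/2) :=
    (continuous_id.mul (cont_aux1 _)).intervalIntegrable _ _
  rw [intervalIntegral.integral_eq_sub_of_hasDerivAt hd hint]
  rw [show (2*(k:ℝ)+1)*(π/2) = (2*(k:ℝ)+1)*(π/2) from rfl]
  rw [sin_odd_half_pi k, cos_odd_half_pi k]
  norm_num

lemma Sf_integral (N : ℕ) :
    ∫ x in (0:ℝ)..(π/2), x * Sf N x
      = π * (∑ k ∈ Finset.range N, (-1)^k/(2*(k:ℝ)+1)^2)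
        - 2 * (∑ k ∈ Finset.range N, 1/(2*(k:ℝ)+1)^3) := by
  have h1 : ∀ x : ℝ, x * Sf N x
      = ∑ k ∈ Finset.range N, (2/(2*(k:ℝ)+1)) * (x * Real.cos ((2*(k:ℝ)+1)*x)) := by
    intro x
    rw [Sf, Finset.mul_sum]
    apply Finset.sum_congr rfl
    intro k _
    ring
  simp_rw [h1]
  rw [intervalIntegral.integral_finset_sum]
  · have h2 : ∀ k ∈ Finset.range N,
        (∫ x in (0:ℝ)..(π/2), (2/(2*(k:ℝ)+1)) * (x * Real.cos ((2*(k:ℝ)+1)*x)))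
          = π * ((-1)^k/(2*(k:ℝ)+1)^2) - 2 * (1/(2*(k:ℝ)+1)^3) := by
      intro k _
      rw [intervalIntegral.integral_const_mul, integral_x_cos k]
      have hm : (2*(k:ℝ)+1) ≠ 0 := by positivity
      field_simp
    rw [Finset.sum_congr rfl h2, Finset.sum_sub_distrib, ← Finset.mul_sum, ← Finset.mul_sum]
  · intro k _
    exact ((continuous_const.mul (continuous_id.mul (cont_aux1 _)))).intervalIntegrable _ _

lemma Ff_bound {x : ℝ} (hx : 0 < x) (hx2 : x ≤ π/2) : |x * Ff x| ≤ π := by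
  have hsx : 0 < Real.sin x := Real.sin_pos_of_pos_of_lt_pi hx
    (lt_of_le_of_lt hx2 (by linarith [Real.pi_pos]))
  have hcx : 0 ≤ Real.cos x := Real.cos_nonneg_of_mem_Icc ⟨by linarith [Real.pi_pos], hx2⟩
  have hy : (0:ℝ) < (1 + Real.cos x)/Real.sin x := by positivity
  have heq : Ff x = Real.log ((1 + Real.cos x)/Real.sin x) := by
    rw [Ff, Real.cot_eq_cos_div_sin, ← add_div]
  have h1 : 1 ≤ (1 + Real.cos x)/Real.sin x := by
    rw [le_div_iff₀ hsx]
    have := Real.sin_le_one x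
    linarith
  have hFnn : 0 ≤ Ff x := by rw [heq]; exact Real.log_nonneg h1
  have hFle : Ff x ≤ π / x := by
    rw [heq]
    have h2 : Real.log ((1 + Real.cos x)/Real.sin x) ≤ (1 + Real.cos x)/Real.sin x - 1 :=
      Real.log_le_sub_one_of_pos hy
    have h3 : (1 + Real.cos x)/Real.sin x ≤ 2 / Real.sin x := by
      gcongr
      linarith [Real.cos_le_one x]
    have h4 : 2 / Real.sin x ≤ π / x := by
      have h5 : 2/π * x ≤ Real.sin x := Real.mul_le_sin hx.le hx2
      have h6 : 0 < 2/π * x := by positivity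
      calc 2 / Real.sin x ≤ 2 / (2/π * x) := by gcongr
        _ = π / x := by
            rw [div_eq_div_iff (by positivity : (0:ℝ) < 2/π*x).ne' hx.ne']
            field_simp
    linarith
  rw [abs_of_nonneg (by positivity)]
  calc x * Ff x ≤ x * (π / x) := by gcongr
    _ = π := by field_simp

lemma intervalIntegrable_xFf : IntervalIntegrable (fun x => x * Ff x) volume 0 (π/2) := by
  rw [intervalIntegrable_iff, Set.uIoc_of_le (by positivity : (0:ℝ) ≤ π/2)]
  apply MeasureTheory.Measure.integrableOn_of_bounded (M := π)
  · exact ne_of_lt (measure_Ioc_lt_top)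
  · apply Measurable.aestronglyMeasurable
    have : (fun x => x * Ff x)
        = fun x => x * Real.log (1/Real.sin x + Real.cos x/Real.sin x) := by
      funext x; rw [Ff, Real.cot_eq_cos_div_sin]
    rw [this]
    exact measurable_id.mul (Real.measurable_log.comp
      ((measurable_const.div Real.measurable_sin).add
        (Real.measurable_cos.div Real.measurable_sin)))
  · rw [ae_restrict_iff' measurableSet_Ioc]
    filter_upwards with x hx
    rw [Real.norm_eq_abs]
    exact Ff_bound hx.1 hx.2

lemma summable_inv_sq_shift : Summable (fun n : ℕ => 1/((n:ℝ)+1)^2) := by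
  have h : Summable (fun n : ℕ => 1/(n:ℝ)^2) := summable_one_div_nat_pow.mpr one_lt_two
  have := (summable_nat_add_iff 1).mpr h
  simpa using this

lemma summable_inv_cube_shift : Summable (fun n : ℕ => 1/((n:ℝ)+1)^3) := by
  have h : Summable (fun n : ℕ => 1/(n:ℝ)^3) := summable_one_div_nat_pow.mpr (by norm_num)
  have := (summable_nat_add_iff 1).mpr h
  simpa using this

lemma hasSum_catalan : HasSum (fun n : ℕ => (-1:ℝ)^n / (2*(n:ℝ)+1)^2) catalanG := by
  have hs : Summable (fun n : ℕ => (-1:ℝ)^n / (2*(n:ℝ)+1)^2) := by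
    apply Summable.of_abs
    apply Summable.of_nonneg_of_le (fun n => abs_nonneg _) _ summable_inv_sq_shift
    intro n
    rw [abs_div, abs_pow, abs_neg, abs_one, one_pow,
      abs_of_pos (by positivity : (0:ℝ) < (2*(n:ℝ)+1)^2)]
    have hle : ((n:ℝ)+1)^2 ≤ (2*(n:ℝ)+1)^2 := by nlinarith [show (0:ℝ) ≤ (n:ℝ) from Nat.cast_nonneg n]
    exact one_div_le_one_div_of_le (show (0:ℝ) < ((n:ℝ)+1)^2 by positivity) hle
  have : catalanG = ∑' n : ℕ, (-1:ℝ)^n / (2*(n:ℝ)+1)^2 := rfl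
  rw [this]
  exact hs.hasSum

lemma hasSum_odd_cubes :
    HasSum (fun k : ℕ => 1/(2*(k:ℝ)+1)^3) (7/8 * ∑' n : ℕ, 1 / ((n:ℝ) + 1) ^ 3) := by
  set z := ∑' n : ℕ, 1 / ((n:ℝ) + 1) ^ 3 with hzdef
  have hz : HasSum (fun n : ℕ => 1/((n:ℝ)+1)^3) z := summable_inv_cube_shift.hasSum
  have hOsum : Summable (fun k : ℕ => 1/(2*(k:ℝ)+1)^3) := by
    apply Summable.of_nonneg_of_le (fun n => by positivity) _ summable_inv_cube_shift
    intro n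
    have hle : ((n:ℝ)+1)^3 ≤ (2*(n:ℝ)+1)^3 := by
      have h0 : (0:ℝ) ≤ (n:ℝ) := Nat.cast_nonneg n
      have : ((n:ℝ)+1) ≤ (2*(n:ℝ)+1) := by linarith
      exact pow_le_pow_left₀ (by linarith) this 3
    exact one_div_le_one_div_of_le (show (0:ℝ) < ((n:ℝ)+1)^3 by positivity) hle
  obtain ⟨O, hO⟩ := hOsum
  have he : HasSum (fun k : ℕ => 1/(((2*k : ℕ):ℝ)+1)^3) O := by
    have : (fun k : ℕ => 1/(((2*k : ℕ):ℝ)+1)^3) = (fun k : ℕ => 1/(2*(k:ℝ)+1)^3) := by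
      funext k; push_cast; ring_nf
    rw [this]; exact hO
  have ho : HasSum (fun k : ℕ => 1/(((2*k+1 : ℕ):ℝ)+1)^3) (1/8 * z) := by
    have h8 := hz.mul_left (1/8)
    have : (fun k : ℕ => 1/(((2*k+1 : ℕ):ℝ)+1)^3)
        = (fun k : ℕ => 1/8 * (1/((k:ℝ)+1)^3)) := by
      funext k
      push_cast
      rw [show (2*(k:ℝ)+1+1) = 2*((k:ℝ)+1) by ring]
      rw [mul_pow]
      norm_num
      ring
    rw [this]; exact h8
  have hall : HasSum (fun n : ℕ => 1/((n:ℝ)+1)^3) (O + 1/8 * z) :=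
    HasSum.even_add_odd he ho
  have huniq : z = O + 1/8 * z := hz.unique hall
  have hOval : O = 7/8 * z := by linarith
  rwa [hOval] at hO

lemma continuous_Sf (N : ℕ) : Continuous (Sf N) := by
  unfold Sf
  apply continuous_finset_sum
  intro k _
  exact (continuous_const.mul (cont_aux1 _)).div_const _

theorem zeta3_catalan_integral :
    (∑' n : ℕ, 1 / ((n : ℝ) + 1) ^ 3) =
      (4 / 7) * (π * catalanG -
        ∫ x in (0 : ℝ)..(π / 2), x * Real.log (1 / Real.sin x + Real.cot x)) := by
  set z := ∑' n : ℕ, 1 / ((n : ℝ) + 1) ^ 3 with hzdef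
  have hIeq : (∫ x in (0:ℝ)..(π/2), x * Real.log (1/Real.sin x + Real.cot x))
      = ∫ x in (0:ℝ)..(π/2), x * Ff x := rfl
  rw [hIeq]
  set I := ∫ x in (0:ℝ)..(π/2), x * Ff x with hI
  have hT1 : Filter.Tendsto (fun N => ∫ x in (0:ℝ)..(π/2), x * Sf N x) atTop
      (𝓝 (π * catalanG - 2 * (7/8 * z))) := by
    simp_rw [Sf_integral]
    exact (hasSum_catalan.tendsto_sum_nat.const_mul π).sub
      (hasSum_odd_cubes.tendsto_sum_nat.const_mul 2)
  have hT2 : Filter.Tendsto (fun N => ∫ x in (0:ℝ)..(π/2), x * Sf N x) atTop (𝓝 I) := by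
    have hdiff : Filter.Tendsto
        (fun N : ℕ => (∫ x in (0:ℝ)..(π/2), x * Sf N x) - I) atTop (𝓝 0) := by
      apply squeeze_zero_norm' (a := fun N : ℕ => π^2/4 * (1/(N:ℝ)))
      · filter_upwards [Filter.eventually_ge_atTop 1] with N hN
        have hNpos : (0:ℝ) < N := by exact_mod_cast hN
        have hintS : IntervalIntegrable (fun x => x * Sf N x) volume 0 (π/2) :=
          (continuous_id.mul (continuous_Sf N)).intervalIntegrable _ _
        have hsub : (∫ x in (0:ℝ)..(π/2), x * Sf N x) - I
            = ∫ x in (0:ℝ)..(π/2), (x * Sf N x - x * Ff x) :=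
          (intervalIntegral.integral_sub hintS intervalIntegrable_xFf).symm
        rw [hsub]
        have hb := intervalIntegral.norm_integral_le_of_norm_le_const
          (a := (0:ℝ)) (b := π/2) (C := π/(2*(N:ℝ)))
          (f := fun x => x * Sf N x - x * Ff x) ?_
        · refine hb.trans (le_of_eq ?_)
          rw [sub_zero, abs_of_pos (by positivity : (0:ℝ) < π/2)]
          field_simp
          ring
        · intro x hx
          rw [Set.uIoc_of_le (by positivity : (0:ℝ) ≤ π/2)] at hx
          obtain ⟨hx1, hx2⟩ := hx
          have hsx : 0 < Real.sin x := Real.sin_pos_of_pos_of_lt_pi hx1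
            (lt_of_le_of_lt hx2 (by linarith [Real.pi_pos]))
          have hkey := key_rep N hx1 hx2
          have hbd := bound_tail N hN hx1 hx2
          rw [← hkey] at hbd
          show ‖x * Sf N x - x * Ff x‖ ≤ π/(2*(N:ℝ))
          rw [Real.norm_eq_abs, show x * Sf N x - x * Ff x = -(x * (Ff x - Sf N x)) by ring,
            abs_neg, abs_mul, abs_of_pos hx1]
          have h5 : 2/π * x ≤ Real.sin x := Real.mul_le_sin hx1.le hx2
          have h6 : (0:ℝ) < 2/π * x := by positivity
          calc x * |Ff x - Sf N x| ≤ x * (1/((N:ℝ) * Real.sin x)) := by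
                exact mul_le_mul_of_nonneg_left hbd hx1.le
            _ ≤ x * (1/((N:ℝ) * (2/π * x))) := by
                gcongr
            _ = π/(2*(N:ℝ)) := by
                field_simp
      · have := tendsto_one_div_atTop_nhds_zero_nat.const_mul (π^2/4)
        simpa using this
    have := hdiff.add (tendsto_const_nhds : Filter.Tendsto (fun _ : ℕ => I) atTop (𝓝 I))
    simpa using this
  have hval : π * catalanG - 2 * (7/8 * z) = I := tendsto_nhds_unique hT1 hT2
  linarith
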